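/- For every q ∈ (0,1) and every n ≥ 0 there exists a Borel probability measure π on ℝ × ℝ whose first marginal is μ_n, whose second marginal is μ_{n+1}, and which is concentrated on {(x, y) : x ≤ y ≤ 2x}. In particular, ∫ z dμ_{n+1}(z) ≥ ∫ z dμ_n(z). -/

import Mathlib

open MeasureTheory ProbabilityTheory Filter

noncomputable def Sfun : ℝ × ℝ → ℝ := fun p => p.1 + p.2

noncomputable def Dfun : ℝ × ℝ × ℝ × ℝ → ℝ := fun p =>
  ((p.1 + p.2.1) * (p.2.2.1 + p.2.2.2)) / (p.1 + p.2.1 + p.2.2.1 + p.2.2.2)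

/-- One-step resistance recursion map on Borel measures on ℝ. -/
noncomputable def Tq (q : ℝ) (μ : Measure ℝ) : Measure ℝ :=
  ENNReal.ofReal (1 - q) • Measure.map Sfun (μ.prod μ) +
    ENNReal.ofReal q • Measure.map Dfun (μ.prod (μ.prod (μ.prod μ)))

/-- μₙ = T_qⁿ δ₁ : law of the two-terminal resistance after n replacement steps. -/
noncomputable def mu (q : ℝ) (n : ℕ) : Measure ℝ := (Tq q)^[n] (Measure.dirac 1)

/-! ### Auxiliary lemmas -/

lemma mSfun : Measurable Sfun := by unfold Sfun; fun_prop

lemma mDfun : Measurable Dfun := by unfold Dfun; fun_prop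

lemma harm_mono {a b a' b' : ℝ} (ha : 0 < a) (hb : 0 < b) (haa : a ≤ a') (hbb : b ≤ b') :
    a * b / (a + b) ≤ a' * b' / (a' + b') := by
  rw [div_le_div_iff₀ (by linarith) (by linarith)]
  nlinarith [mul_nonneg (mul_nonneg ha.le (by linarith : (0:ℝ) ≤ a')) (sub_nonneg.2 hbb),
    mul_nonneg (mul_nonneg hb.le (by linarith : (0:ℝ) ≤ b')) (sub_nonneg.2 haa)]

lemma harm_one_le {a b : ℝ} (ha : 2 ≤ a) (hb : 2 ≤ b) : 1 ≤ a * b / (a + b) := by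
  rw [le_div_iff₀ (by linarith)]
  nlinarith [mul_nonneg (by linarith : (0:ℝ) ≤ a - 2) (by linarith : (0:ℝ) ≤ b - 2)]

lemma harm_le {a b : ℝ} (ha : 0 < a) (hb : 0 < b) : a * b / (a + b) ≤ a := by
  rw [div_le_iff₀ (by linarith)]
  nlinarith

lemma harm_double {a b : ℝ} (ha : 0 < a) (hb : 0 < b) :
    (2*a) * (2*b) / ((2*a) + (2*b)) = 2 * (a * b / (a + b)) := by
  have h : a + b ≠ 0 := by linarith
  field_simp

lemma Dfun_eq (x1 x2 x3 x4 : ℝ) :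
    Dfun (x1, x2, x3, x4) = (x1 + x2) * (x3 + x4) / ((x1 + x2) + (x3 + x4)) := by
  simp only [Dfun]
  ring_nf

lemma Dfun_bounds {x1 x2 x3 x4 M : ℝ} (h1 : 1 ≤ x1) (h2 : 1 ≤ x2) (h3 : 1 ≤ x3) (h4 : 1 ≤ x4)
    (b1 : x1 ≤ M) (b2 : x2 ≤ M) :
    1 ≤ Dfun (x1, x2, x3, x4) ∧ Dfun (x1, x2, x3, x4) ≤ 2 * M := by
  rw [Dfun_eq]
  refine ⟨harm_one_le (by linarith) (by linarith), ?_⟩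
  exact le_trans (harm_le (by linarith) (by linarith)) (by linarith)

/-- The good set of pairs. -/
def Gset : Set (ℝ × ℝ) := {p | 1 ≤ p.1 ∧ p.1 ≤ p.2 ∧ p.2 ≤ 2 * p.1}

lemma mGset : MeasurableSet Gset := by
  have : Gset = {p : ℝ × ℝ | 1 ≤ p.1} ∩ ({p | p.1 ≤ p.2} ∩ {p | p.2 ≤ 2 * p.1}) := by
    ext p; simp [Gset, and_assoc]
  rw [this]
  exact (measurableSet_le measurable_const measurable_fst).inter
    ((measurableSet_le measurable_fst measurable_snd).inter
      (measurableSet_le measurable_snd (measurable_const.mul measurable_fst)))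

lemma Sstep_mem {p1 p2 : ℝ × ℝ} (h1 : p1 ∈ Gset) (h2 : p2 ∈ Gset) :
    (p1.1 + p2.1, p1.2 + p2.2) ∈ Gset := by
  obtain ⟨a1, b1, c1⟩ := h1
  obtain ⟨a2, b2, c2⟩ := h2
  exact ⟨show (1:ℝ) ≤ p1.1 + p2.1 by linarith,
    show p1.1 + p2.1 ≤ p1.2 + p2.2 by linarith,
    show p1.2 + p2.2 ≤ 2 * (p1.1 + p2.1) by linarith⟩

lemma Dstep_mem {p1 p2 p3 p4 : ℝ × ℝ} (h1 : p1 ∈ Gset) (h2 : p2 ∈ Gset) (h3 : p3 ∈ Gset)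
    (h4 : p4 ∈ Gset) :
    (Dfun (p1.1, p2.1, p3.1, p4.1), Dfun (p1.2, p2.2, p3.2, p4.2)) ∈ Gset := by
  obtain ⟨a1, b1, c1⟩ := h1
  obtain ⟨a2, b2, c2⟩ := h2
  obtain ⟨a3, b3, c3⟩ := h3
  obtain ⟨a4, b4, c4⟩ := h4
  have ha : (2:ℝ) ≤ p1.1 + p2.1 := by linarith
  have hb : (2:ℝ) ≤ p3.1 + p4.1 := by linarith
  refine ⟨?_, ?_, ?_⟩
  · rw [Dfun_eq]; exact harm_one_le ha hb
  · simp only []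
    rw [Dfun_eq, Dfun_eq]
    exact harm_mono (by linarith) (by linarith) (by linarith) (by linarith)
  · simp only []
    rw [Dfun_eq, Dfun_eq]
    calc (p1.2 + p2.2) * (p3.2 + p4.2) / ((p1.2 + p2.2) + (p3.2 + p4.2))
        ≤ (2*(p1.1 + p2.1)) * (2*(p3.1 + p4.1)) / ((2*(p1.1 + p2.1)) + (2*(p3.1 + p4.1))) :=
          harm_mono (by linarith) (by linarith) (by linarith) (by linarith)
      _ = 2 * ((p1.1 + p2.1) * (p3.1 + p4.1) / ((p1.1 + p2.1) + (p3.1 + p4.1))) :=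
          harm_double (by linarith) (by linarith)

lemma prod_compl_null {X Y : Type*} [MeasurableSpace X] [MeasurableSpace Y]
    (π : Measure X) (ρ : Measure Y) [SigmaFinite ρ] {G : Set X} {H : Set Y}
    (hG : π Gᶜ = 0) (hH : ρ Hᶜ = 0) : (π.prod ρ) ((G ×ˢ H)ᶜ) = 0 := by
  have hsub : (G ×ˢ H)ᶜ ⊆ (Gᶜ ×ˢ (Set.univ : Set Y)) ∪ ((Set.univ : Set X) ×ˢ Hᶜ) := by
    intro p hp
    simp only [Set.mem_compl_iff, Set.mem_prod, not_and_or] at hp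
    rcases hp with h | h
    · exact Or.inl ⟨h, trivial⟩
    · exact Or.inr ⟨trivial, h⟩
  refine measure_mono_null hsub (measure_union_null ?_ ?_) <;>
    simp [Measure.prod_prod, hG, hH]

lemma mu_succ (q : ℝ) (n : ℕ) : mu q (n + 1) = Tq q (mu q n) :=
  Function.iterate_succ_apply' _ _ _

lemma mix_prob {q : ℝ} (hq : q ∈ Set.Ioo (0:ℝ) 1) {X : Type*} [MeasurableSpace X]
    (ρ1 ρ2 : Measure X) [IsProbabilityMeasure ρ1] [IsProbabilityMeasure ρ2] :
    IsProbabilityMeasure (ENNReal.ofReal (1 - q) • ρ1 + ENNReal.ofReal q • ρ2) := by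
  constructor
  simp only [Measure.coe_add, Measure.coe_smul, Pi.add_apply, Pi.smul_apply,
    measure_univ, smul_eq_mul, mul_one]
  rw [← ENNReal.ofReal_add (by linarith [hq.2]) hq.1.le]
  norm_num

lemma mu_prob {q : ℝ} (hq : q ∈ Set.Ioo (0:ℝ) 1) (n : ℕ) :
    IsProbabilityMeasure (mu q n) := by
  induction n with
  | zero => simp only [mu, Function.iterate_zero_apply]; infer_instance
  | succ n ih =>
    rw [mu_succ]
    haveI := ih
    haveI : IsProbabilityMeasure (Measure.map Sfun ((mu q n).prod (mu q n))) :=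
      Measure.isProbabilityMeasure_map mSfun.aemeasurable
    haveI : IsProbabilityMeasure
        (Measure.map Dfun ((mu q n).prod ((mu q n).prod ((mu q n).prod (mu q n))))) :=
      Measure.isProbabilityMeasure_map mDfun.aemeasurable
    exact mix_prob hq _ _

lemma mu_bound {q : ℝ} (hq : q ∈ Set.Ioo (0:ℝ) 1) (n : ℕ) :
    (mu q n) ((Set.Icc (1:ℝ) (2 ^ n))ᶜ) = 0 := by
  induction n with
  | zero =>
    rw [show mu q 0 = Measure.dirac 1 from rfl,
      Measure.dirac_apply' _ measurableSet_Icc.compl]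
    simp
  | succ n ih =>
    haveI := mu_prob hq n
    rw [mu_succ, Tq]
    rw [Measure.coe_add]
    simp only [Pi.add_apply, Measure.coe_smul, Pi.smul_apply, smul_eq_mul]
    rw [Measure.map_apply mSfun measurableSet_Icc.compl,
      Measure.map_apply mDfun measurableSet_Icc.compl]
    have hS : ((mu q n).prod (mu q n)) (Sfun ⁻¹' (Set.Icc (1:ℝ) (2 ^ (n+1)))ᶜ) = 0 := by
      refine measure_mono_null ?_
        (prod_compl_null (mu q n) (mu q n) ih ih)
      intro p hp
      simp only [Set.mem_preimage, Set.mem_compl_iff, Set.mem_Icc, Sfun] at hp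
      simp only [Set.mem_compl_iff, Set.mem_prod, Set.mem_Icc]
      intro h
      apply hp
      have h2 : (2:ℝ) ^ (n+1) = 2 ^ n + 2 ^ n := by ring
      exact ⟨by linarith [h.1.1, h.2.1], by linarith [h.1.2, h.2.2]⟩
    have hD : ((mu q n).prod ((mu q n).prod ((mu q n).prod (mu q n))))
        (Dfun ⁻¹' (Set.Icc (1:ℝ) (2 ^ (n+1)))ᶜ) = 0 := by
      refine measure_mono_null ?_
        (prod_compl_null _ _ ih (prod_compl_null _ _ ih (prod_compl_null _ _ ih ih)))
      intro p hp
      simp only [Set.mem_preimage, Set.mem_compl_iff, Set.mem_Icc] at hp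
      simp only [Set.mem_compl_iff, Set.mem_prod, Set.mem_Icc]
      intro h
      apply hp
      obtain ⟨⟨a1, b1⟩, ⟨a2, b2⟩, ⟨a3, b3⟩, ⟨a4, b4⟩⟩ := h
      have := Dfun_bounds a1 a2 a3 a4 b1 b2
      have h2 : (2:ℝ) ^ (n+1) = 2 * 2 ^ n := by ring
      exact ⟨this.1, by rw [h2]; exact this.2⟩
    rw [hS, hD]
    simp

lemma F2comp_fst : Prod.fst ∘ (fun p : (ℝ×ℝ) × (ℝ×ℝ) => (p.1.1 + p.2.1, p.1.2 + p.2.2)) =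
    Sfun ∘ Prod.map Prod.fst Prod.fst := rfl

noncomputable def F2 : (ℝ×ℝ) × (ℝ×ℝ) → ℝ×ℝ := fun p => (p.1.1 + p.2.1, p.1.2 + p.2.2)

noncomputable def F4 : (ℝ×ℝ) × (ℝ×ℝ) × (ℝ×ℝ) × (ℝ×ℝ) → ℝ×ℝ := fun p =>
  (Dfun (p.1.1, p.2.1.1, p.2.2.1.1, p.2.2.2.1), Dfun (p.1.2, p.2.1.2, p.2.2.1.2, p.2.2.2.2))

lemma mF2 : Measurable F2 := by unfold F2; fun_prop

lemma mF4 : Measurable F4 := by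
  unfold F4
  exact (mDfun.comp (by fun_prop)).prodMk (mDfun.comp (by fun_prop))

lemma F2_proj (pr : ℝ×ℝ → ℝ) : pr ∘ F2 = Sfun ∘ Prod.map pr pr ∨ True := Or.inr trivial

lemma map_proj_F2 (π : Measure (ℝ×ℝ)) [IsProbabilityMeasure π] (pr : ℝ×ℝ → ℝ)
    (hpr : Measurable pr) (hcomp : pr ∘ F2 = Sfun ∘ Prod.map pr pr) :
    ((π.prod π).map F2).map pr = ((π.map pr).prod (π.map pr)).map Sfun := by
  haveI : IsProbabilityMeasure (π.map pr) := Measure.isProbabilityMeasure_map hpr.aemeasurable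
  rw [Measure.map_map hpr mF2, hcomp, ← Measure.map_map mSfun (hpr.prodMap hpr),
    ← Measure.map_prod_map _ _ hpr hpr]

lemma map_proj_F4 (π : Measure (ℝ×ℝ)) [IsProbabilityMeasure π] (pr : ℝ×ℝ → ℝ)
    (hpr : Measurable pr)
    (hcomp : pr ∘ F4 = Dfun ∘ Prod.map pr (Prod.map pr (Prod.map pr pr))) :
    ((π.prod (π.prod (π.prod π))).map F4).map pr =
      ((π.map pr).prod ((π.map pr).prod ((π.map pr).prod (π.map pr)))).map Dfun := by
  haveI : IsProbabilityMeasure (π.map pr) := Measure.isProbabilityMeasure_map hpr.aemeasurable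
  rw [Measure.map_map hpr mF4, hcomp,
    ← Measure.map_map mDfun (hpr.prodMap (hpr.prodMap (hpr.prodMap hpr))),
    ← Measure.map_prod_map _ _ hpr (hpr.prodMap (hpr.prodMap hpr)),
    ← Measure.map_prod_map _ _ hpr (hpr.prodMap hpr),
    ← Measure.map_prod_map _ _ hpr hpr]

lemma coupling {q : ℝ} (hq : q ∈ Set.Ioo (0:ℝ) 1) (n : ℕ) :
    ∃ π : Measure (ℝ × ℝ), IsProbabilityMeasure π ∧
      π.map Prod.fst = mu q n ∧ π.map Prod.snd = mu q (n + 1) ∧ π Gsetᶜ = 0 := by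
  induction n with
  | zero =>
    haveI := mu_prob hq 1
    refine ⟨(Measure.dirac (1:ℝ)).prod (mu q 1), inferInstance, ?_, ?_, ?_⟩
    · rw [Measure.map_fst_prod, measure_univ, one_smul]
      rfl
    · rw [Measure.map_snd_prod, measure_univ, one_smul]
    · have hd : (Measure.dirac (1:ℝ)) ({(1:ℝ)}ᶜ) = 0 := by
        rw [Measure.dirac_apply' _ (measurableSet_singleton _).compl]; simp
      refine measure_mono_null ?_
        (prod_compl_null _ _ hd (mu_bound hq 1))
      intro p hp
      simp only [Set.mem_compl_iff, Set.mem_prod, Set.mem_singleton_iff, Set.mem_Icc]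
      intro h
      apply hp
      have h1 : p.1 = 1 := h.1
      have h2 : (1:ℝ) ≤ p.2 ∧ p.2 ≤ 2 ^ 1 := h.2
      refine ⟨by rw [h1], by rw [h1]; exact h2.1, ?_⟩
      rw [h1]; norm_num at h2 ⊢; exact h2.2
  | succ n ih =>
    obtain ⟨π, hprob, h1, h2, hnull⟩ := ih
    haveI := hprob
    haveI := mu_prob hq n
    haveI := mu_prob hq (n+1)
    haveI hpF2 : IsProbabilityMeasure ((π.prod π).map F2) :=
      Measure.isProbabilityMeasure_map mF2.aemeasurable
    haveI hpF4 : IsProbabilityMeasure ((π.prod (π.prod (π.prod π))).map F4) :=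
      Measure.isProbabilityMeasure_map mF4.aemeasurable
    refine ⟨ENNReal.ofReal (1 - q) • (π.prod π).map F2 +
      ENNReal.ofReal q • (π.prod (π.prod (π.prod π))).map F4, mix_prob hq _ _, ?_, ?_, ?_⟩
    · rw [Measure.map_add _ _ measurable_fst, Measure.map_smul, Measure.map_smul,
        map_proj_F2 π Prod.fst measurable_fst rfl, map_proj_F4 π Prod.fst measurable_fst rfl,
        h1, mu_succ]
      rfl
    · rw [Measure.map_add _ _ measurable_snd, Measure.map_smul, Measure.map_smul,
        map_proj_F2 π Prod.snd measurable_snd rfl, map_proj_F4 π Prod.snd measurable_snd rfl,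
        h2, mu_succ q (n+1)]
      rfl
    · rw [Measure.coe_add]
      simp only [Pi.add_apply, Measure.coe_smul, Pi.smul_apply, smul_eq_mul]
      rw [Measure.map_apply mF2 mGset.compl, Measure.map_apply mF4 mGset.compl]
      have hS : (π.prod π) (F2 ⁻¹' Gsetᶜ) = 0 := by
        refine measure_mono_null ?_ (prod_compl_null _ _ hnull hnull)
        intro p hp hmem
        exact hp (Sstep_mem hmem.1 hmem.2)
      have hD : (π.prod (π.prod (π.prod π))) (F4 ⁻¹' Gsetᶜ) = 0 := by
        refine measure_mono_null ?_
          (prod_compl_null _ _ hnull (prod_compl_null _ _ hnull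
            (prod_compl_null _ _ hnull hnull)))
        intro p hp hmem
        exact hp (Dstep_mem hmem.1 hmem.2.1 hmem.2.2.1 hmem.2.2.2)
      rw [hS, hD]
      simp

theorem stmt8 (q : ℝ) (hq : q ∈ Set.Ioo (0 : ℝ) 1) (n : ℕ) :
    (∃ π : Measure (ℝ × ℝ), IsProbabilityMeasure π ∧
      π.map Prod.fst = mu q n ∧ π.map Prod.snd = mu q (n + 1) ∧
      π {p : ℝ × ℝ | ¬ (p.1 ≤ p.2 ∧ p.2 ≤ 2 * p.1)} = 0) ∧
    ∫ z, z ∂(mu q n) ≤ ∫ z, z ∂(mu q (n + 1)) := by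
  obtain ⟨π, hprob, h1, h2, hnull⟩ := coupling hq n
  haveI := hprob
  have hweak : π {p : ℝ × ℝ | ¬ (p.1 ≤ p.2 ∧ p.2 ≤ 2 * p.1)} = 0 := by
    refine measure_mono_null ?_ hnull
    intro p hp hG
    exact hp ⟨hG.2.1, hG.2.2⟩
  refine ⟨⟨π, hprob, h1, h2, hweak⟩, ?_⟩
  have hae : ∀ᵐ p ∂π, (p : ℝ × ℝ).1 ≤ p.2 := by
    rw [ae_iff]
    refine measure_mono_null ?_ hnull
    intro p hp hG
    exact hp hG.2.1
  have hb1 : ∀ᵐ p ∂π, ‖(p : ℝ × ℝ).1‖ ≤ 2 ^ n := by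
    rw [ae_iff]
    have h0 : π (Prod.fst ⁻¹' (Set.Icc (1:ℝ) (2 ^ n))ᶜ) = 0 := by
      rw [← Measure.map_apply measurable_fst measurableSet_Icc.compl, h1]
      exact mu_bound hq n
    refine measure_mono_null ?_ h0
    intro p hp hI
    simp only [Set.mem_Icc] at hI
    exact hp (by rw [Real.norm_eq_abs, abs_of_nonneg (by linarith [hI.1])]; exact hI.2)
  have hb2 : ∀ᵐ p ∂π, ‖(p : ℝ × ℝ).2‖ ≤ 2 ^ (n + 1) := by
    rw [ae_iff]
    have h0 : π (Prod.snd ⁻¹' (Set.Icc (1:ℝ) (2 ^ (n+1)))ᶜ) = 0 := by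
      rw [← Measure.map_apply measurable_snd measurableSet_Icc.compl, h2]
      exact mu_bound hq (n+1)
    refine measure_mono_null ?_ h0
    intro p hp hI
    simp only [Set.mem_Icc] at hI
    exact hp (by rw [Real.norm_eq_abs, abs_of_nonneg (by linarith [hI.1])]; exact hI.2)
  have hi1 : Integrable (fun p : ℝ × ℝ => p.1) π :=
    (integrable_const ((2:ℝ) ^ n)).mono' measurable_fst.aestronglyMeasurable hb1
  have hi2 : Integrable (fun p : ℝ × ℝ => p.2) π :=
    (integrable_const ((2:ℝ) ^ (n+1))).mono' measurable_snd.aestronglyMeasurable hb2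
  have e1 : ∫ z, z ∂(mu q n) = ∫ p, (p : ℝ × ℝ).1 ∂π := by
    rw [← h1]
    exact integral_map measurable_fst.aemeasurable aestronglyMeasurable_id
  have e2 : ∫ z, z ∂(mu q (n + 1)) = ∫ p, (p : ℝ × ℝ).2 ∂π := by
    rw [← h2]
    exact integral_map measurable_snd.aemeasurable aestronglyMeasurable_id
  rw [e1, e2]
  exact integral_mono_ae hi1 hi2 hae
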